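/- Vanishing-atom limit: let r > 1 and let μ be a Borel probability measure on ℝ with μ({0}) = (r−1)/r. Let G_μ(z) = ∫_ℝ 1/(z−s) dμ(s) for z in the upper half-plane ℂ⁺ (note G_μ(z) ≠ 0 there), and let F_μ = 1/G_μ. Suppose α ∈ ℝ and a finite Borel measure ρ on ℝ satisfy the Nevanlinna representation F_μ(z) = α + z + ∫_ℝ (1 + s z)/(s − z) dρ(s) for all z ∈ ℂ⁺. Then lim_{y → 0⁺} ∫_ℝ (s²+1)/(s² + y²) dρ(s) = 1/(r−1). -/

import Mathlib

open MeasureTheory Complex Filter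

/-- vanishing-atom limit. Let `r > 1` and let `μ` be a probability
measure with `μ({0}) = (r−1)/r`. If `F_μ = 1/G_μ` (with `G_μ` the Cauchy transform)
admits a Nevanlinna representation with data `(α, ρ)`, then
`∫ (s²+1)/(s² + y²) dρ(s) → 1/(r−1)` as `y → 0⁺`. -/
theorem vanishing_atom_limit (r : ℝ) (hr : 1 < r)
    (μ : Measure ℝ) [IsProbabilityMeasure μ]
    (hatom : μ {0} = ENNReal.ofReal ((r - 1) / r))
    (α : ℝ) (ρ : Measure ℝ) [IsFiniteMeasure ρ]
    (hF : ∀ z : ℂ, 0 < z.im →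
      (∫ s, (1 : ℂ) / (z - (s : ℂ)) ∂μ)⁻¹
        = (α : ℂ) + z + ∫ s, (1 + (s : ℂ) * z) / ((s : ℂ) - z) ∂ρ) :
    Tendsto (fun y : ℝ => ∫ s, (s ^ 2 + 1) / (s ^ 2 + y ^ 2) ∂ρ)
      (nhdsWithin 0 (Set.Ioi 0)) (nhds (1 / (r - 1))) := by
  have hr0 : (0:ℝ) < r := lt_trans one_pos hr
  set c : ℝ := (r - 1) / r with hc
  have hc0 : 0 < c := div_pos (by linarith) hr0
  set H : ℝ → ℂ := fun y => ∫ s, (Complex.I * y) / (Complex.I * y - s) ∂μ with hH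
  -- Step A : H y → c as y → 0+
  have hHlim : Tendsto H (nhdsWithin 0 (Set.Ioi 0)) (nhds (c : ℂ)) := by
    have hint : (∫ s, Set.indicator ({0}:Set ℝ) (fun _ => (1:ℂ)) s ∂μ) = (c:ℂ) := by
      rw [integral_indicator_const (1:ℂ) (measurableSet_singleton 0), measureReal_def, hatom,
        ENNReal.toReal_ofReal hc0.le]
      simp
    rw [hH, ← hint]
    apply tendsto_integral_filter_of_dominated_convergence (fun _ => (1:ℝ))
    · filter_upwards [self_mem_nhdsWithin] with y hy
      have hy0 : (0:ℝ) < y := hy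
      apply Continuous.aestronglyMeasurable
      apply continuous_const.div (by fun_prop)
      intro s h
      have h2 : (Complex.I * (y:ℂ) - (s:ℂ)).im = 0 := by rw [h]; simp
      simp at h2
      linarith
    · filter_upwards with y
      filter_upwards with s
      rw [norm_div]
      apply div_le_one_of_le₀ _ (norm_nonneg _)
      have h1 : ‖Complex.I * (y:ℂ)‖ = |y| := by
        simp
      have h2 : |y| ≤ ‖Complex.I * (y:ℂ) - (s:ℂ)‖ := by
        have h3 := Complex.abs_im_le_norm (Complex.I * (y:ℂ) - (s:ℂ))
        simpa using h3
      rw [h1]; exact h2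
    · exact integrable_const 1
    · filter_upwards with s
      by_cases hs : s = 0
      · subst hs
        have hev : ∀ᶠ y : ℝ in nhdsWithin (0:ℝ) (Set.Ioi 0),
            Complex.I * (y:ℂ) / (Complex.I * (y:ℂ) - ((0:ℝ):ℂ)) = 1 := by
          filter_upwards [self_mem_nhdsWithin] with y hy
          have hy0 : (0:ℝ) < y := hy
          have hzne : Complex.I * (y:ℂ) ≠ 0 := by
            simp [Complex.ext_iff, hy0.ne']
          simp [div_self hzne]
        refine Tendsto.congr' (by filter_upwards [hev] with y h using h.symm) ?_
        simp
      · have hnum : Tendsto (fun y : ℝ => Complex.I * (y:ℂ))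
            (nhdsWithin 0 (Set.Ioi 0)) (nhds 0) := by
          have h4 := (Complex.continuous_ofReal.tendsto (0:ℝ)).const_mul Complex.I
          simp only [Complex.ofReal_zero, mul_zero] at h4
          exact h4.mono_left nhdsWithin_le_nhds
        have hden : Tendsto (fun y : ℝ => Complex.I * (y:ℂ) - (s:ℂ))
            (nhdsWithin 0 (Set.Ioi 0)) (nhds (-(s:ℂ))) := by
          have h6 := hnum.sub (tendsto_const_nhds :
            Tendsto (fun _ : ℝ => (s:ℂ)) (nhdsWithin 0 (Set.Ioi 0)) (nhds (s:ℂ)))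
          simpa using h6
        have hsne : (-(s:ℂ)) ≠ 0 := by
          simp [Complex.ext_iff, hs]
        have h7 : Tendsto (fun y : ℝ => Complex.I * (y:ℂ) / (Complex.I * (y:ℂ) - (s:ℂ)))
            (nhdsWithin 0 (Set.Ioi 0)) (nhds (0 / -(s:ℂ))) := hnum.div hden hsne
        simpa [Set.indicator_of_notMem, hs] using h7
  -- eventual identity
  have hkey : ∀ᶠ y in nhdsWithin (0:ℝ) (Set.Ioi 0),
      (∫ s, (s ^ 2 + 1) / (s ^ 2 + y ^ 2) ∂ρ) = ((H y)⁻¹).re - 1 := by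
    filter_upwards [Ioo_mem_nhdsGT_of_mem (by norm_num : (0:ℝ) ∈ Set.Ico 0 1)] with y hy
    obtain ⟨hy0, hy1⟩ := hy
    set z : ℂ := Complex.I * y with hz
    have hzim : z.im = y := by simp [hz]
    have hzne : z ≠ 0 := by
      simp [hz, Complex.ext_iff, hy0.ne']
    have hcont : Continuous fun s : ℝ => (1 + (s:ℂ) * z) / ((s:ℂ) - z) := by
      apply Continuous.div (by fun_prop) (by fun_prop)
      intro s h
      have h2 : ((s:ℂ) - z).im = 0 := by rw [h]; simp
      simp [hzim] at h2
      linarith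
    have hbound : ∀ s : ℝ, ‖(1 + (s:ℂ) * z) / ((s:ℂ) - z)‖ ≤ 1 / y := by
      intro s
      have hdenpos : (0:ℝ) < ‖(s:ℂ) - z‖ := by
        rw [norm_pos_iff]
        intro h
        have h2 : ((s:ℂ) - z).im = 0 := by rw [h]; simp
        simp [hzim] at h2
        linarith
      rw [norm_div, div_le_div_iff₀ hdenpos hy0]
      have e1 : ‖(1:ℂ) + (s:ℂ) * z‖^2 = 1 + (s*y)^2 := by
        rw [Complex.sq_norm, Complex.normSq_apply]
        simp [hz]
        ring
      have e2 : ‖(s:ℂ) - z‖^2 = s^2 + y^2 := by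
        rw [Complex.sq_norm, Complex.normSq_apply]
        simp [hz]
        ring
      have hsq : (‖(1:ℂ) + (s:ℂ) * z‖ * y)^2 ≤ (1 * ‖(s:ℂ) - z‖)^2 := by
        rw [mul_pow, one_mul, e1, e2]
        have hy2 : y^2 ≤ 1 := by nlinarith
        have h7 : s^2*(y^2*y^2) ≤ s^2*1 := by
          apply mul_le_mul_of_nonneg_left _ (sq_nonneg s)
          nlinarith
        nlinarith [h7]
      have := (pow_le_pow_iff_left₀ (by positivity) (by positivity) two_ne_zero).mp hsq
      exact this
    have hint : Integrable (fun s : ℝ => (1 + (s:ℂ) * z) / ((s:ℂ) - z)) ρ := by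
      refine ⟨hcont.aestronglyMeasurable, ?_⟩
      apply MeasureTheory.HasFiniteIntegral.of_bounded (C := 1/y)
      filter_upwards with s using hbound s
    have hrep := hF z (by rw [hzim]; exact hy0)
    have hHy : H y = z * ∫ s, (1:ℂ) / (z - (s:ℂ)) ∂μ := by
      rw [hH, ← MeasureTheory.integral_const_mul]
      simp_rw [mul_one_div]
      rfl
    have hGinv : (∫ s, (1:ℂ) / (z - (s:ℂ)) ∂μ)⁻¹ = z * (H y)⁻¹ := by
      rw [hHy, mul_inv, ← mul_assoc, mul_inv_cancel₀ hzne, one_mul]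
    have him : ∀ s : ℝ, ((1 + (s:ℂ) * z) / ((s:ℂ) - z)).im = y * ((s^2+1)/(s^2+y^2)) := by
      intro s
      rw [Complex.div_im]
      have hd : Complex.normSq ((s:ℂ) - z) = s^2 + y^2 := by
        simp [Complex.normSq_apply, hz]
        ring
      have h1 : ((1:ℂ) + (s:ℂ) * z).im = s * y := by simp [hz]
      have h2 : ((1:ℂ) + (s:ℂ) * z).re = 1 := by simp [hz]
      have h3 : ((s:ℂ) - z).re = s := by simp [hz]
      have h4 : ((s:ℂ) - z).im = -y := by simp [hz]
      rw [hd, h1, h2, h3, h4]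
      have hne : s^2 + y^2 ≠ 0 := by positivity
      field_simp
      ring
    have himJ : (∫ s, (1 + (s:ℂ) * z) / ((s:ℂ) - z) ∂ρ).im
        = y * ∫ s, (s^2+1)/(s^2+y^2) ∂ρ := by
      have h10 := ContinuousLinearMap.integral_comp_comm Complex.imCLM hint
      simp only [Complex.imCLM_apply] at h10
      rw [← h10]
      simp_rw [him]
      exact MeasureTheory.integral_const_mul y _
    have hLim : (z * (H y)⁻¹).im = y * ((H y)⁻¹).re := by
      simp [hz, Complex.mul_im]
    have heq : y * ((H y)⁻¹).re
        = y + y * ∫ s, (s^2+1)/(s^2+y^2) ∂ρ := by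
      have h8 : (z * (H y)⁻¹).im = ((α:ℂ) + z + ∫ s, (1 + (s:ℂ) * z) / ((s:ℂ) - z) ∂ρ).im := by
        rw [← hGinv, hrep]
      rw [hLim] at h8
      rw [h8, Complex.add_im, Complex.add_im, Complex.ofReal_im, hzim, himJ, zero_add]
    have h9 : ((H y)⁻¹).re = 1 + ∫ s, (s^2+1)/(s^2+y^2) ∂ρ := by
      apply mul_left_cancel₀ hy0.ne'
      rw [heq]; ring
    rw [h9]; ring
  -- conclude
  have hcne : (c:ℂ) ≠ 0 := by
    simp only [ne_eq, Complex.ofReal_eq_zero]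
    exact hc0.ne'
  have h1 : Tendsto (fun y => (H y)⁻¹) (nhdsWithin (0:ℝ) (Set.Ioi 0)) (nhds ((c:ℂ)⁻¹)) :=
    hHlim.inv₀ hcne
  have h2 : Tendsto (fun y => ((H y)⁻¹).re) (nhdsWithin (0:ℝ) (Set.Ioi 0)) (nhds (((c:ℂ)⁻¹).re)) :=
    (Complex.continuous_re.tendsto _).comp h1
  have h3 : ((c:ℂ)⁻¹).re = c⁻¹ := by
    rw [← Complex.ofReal_inv]; simp
  rw [h3] at h2
  have h4 : c⁻¹ - 1 = 1 / (r - 1) := by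
    rw [hc]
    have ha : r ≠ 0 := hr0.ne'
    have hb : r - 1 ≠ 0 := by linarith
    field_simp
    ring
  have h5 := h2.sub (tendsto_const_nhds :
    Tendsto (fun _ : ℝ => (1:ℝ)) (nhdsWithin 0 (Set.Ioi 0)) (nhds 1))
  rw [h4] at h5
  exact h5.congr' (by filter_upwards [hkey] with y h using h.symm)
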